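/- Let F ∈ ℂ[X] be a polynomial of degree n ≥ 2, let m ∈ ℂ and r > 0, and set N := ⌈log₂(1 + log₂ n)⌉ + 5, ρ₁ := 2√2/3, ρ₂ := 4/3. Let k be an integer with 0 ≤ k ≤ n, and suppose that the open disk D(m, ρ₁·r) contains exactly k roots of F counted with multiplicity and that F has no root z with ρ₁·r ≤ |z − m| < ρ₂·r. Let G := (F_Δ)^{[N]} be the N-th Graeffe iterate of F_Δ(X) := F(m + r·X). Then T_k(0, 1, 3/2, G) holds, i.e. the k-th coefficient g_k of G satisfies |g_k| > (3/2)·∑_{0 ≤ i ≤ n, i ≠ k} |g_i|. -/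

import Mathlib

open Polynomial Finset

/-- The even part `F_e = ∑_j a_{2j} X^j` of a polynomial `F = ∑ a_i X^i`. -/
noncomputable def evenPart (F : Polynomial ℂ) : Polynomial ℂ :=
  ∑ j ∈ Finset.range (F.natDegree + 1), Polynomial.C (F.coeff (2 * j)) * Polynomial.X ^ j

/-- The odd part `F_o = ∑_j a_{2j+1} X^j` of a polynomial `F = ∑ a_i X^i`,
so that `F(X) = F_e(X²) + X·F_o(X²)`. -/
noncomputable def oddPart (F : Polynomial ℂ) : Polynomial ℂ :=
  ∑ j ∈ Finset.range (F.natDegree + 1), Polynomial.C (F.coeff (2 * j + 1)) * Polynomial.X ^ j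

/-- The first Graeffe iterate `F^{[1]} := (−1)^n·(F_e² − X·F_o²)` where `n = deg F`. -/
noncomputable def graeffe (F : Polynomial ℂ) : Polynomial ℂ :=
  (-1) ^ F.natDegree * (evenPart F ^ 2 - Polynomial.X * oddPart F ^ 2)

open Classical in
/-- The number of roots of `F` (counted with multiplicity) in the open disk `D(m, r)`. -/
noncomputable def rootsInDisk (F : Polynomial ℂ) (m : ℂ) (r : ℝ) : ℕ :=
  Multiset.card (F.roots.filter fun z => ‖z - m‖ < r)

lemma coeff_evenPart (F : Polynomial ℂ) (i : ℕ) : (evenPart F).coeff i = F.coeff (2 * i) := by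
  rw [evenPart, finset_sum_coeff]
  simp only [coeff_C_mul, coeff_X_pow, mul_ite, mul_one, mul_zero]
  rw [Finset.sum_ite_eq (Finset.range (F.natDegree + 1)) i (fun j => F.coeff (2 * j))]
  by_cases h : i ∈ Finset.range (F.natDegree + 1)
  · rw [if_pos h]
  · rw [if_neg h]
    rw [Finset.mem_range, not_lt] at h
    exact (F.coeff_eq_zero_of_natDegree_lt (by omega)).symm

lemma coeff_oddPart (F : Polynomial ℂ) (i : ℕ) : (oddPart F).coeff i = F.coeff (2 * i + 1) := by
  rw [oddPart, finset_sum_coeff]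
  simp only [coeff_C_mul, coeff_X_pow, mul_ite, mul_one, mul_zero]
  rw [Finset.sum_ite_eq (Finset.range (F.natDegree + 1)) i (fun j => F.coeff (2 * j + 1))]
  by_cases h : i ∈ Finset.range (F.natDegree + 1)
  · rw [if_pos h]
  · rw [if_neg h]
    rw [Finset.mem_range, not_lt] at h
    exact (F.coeff_eq_zero_of_natDegree_lt (by omega)).symm

lemma evenOdd_decomp (F : Polynomial ℂ) :
    Polynomial.expand ℂ 2 (evenPart F) + Polynomial.X * Polynomial.expand ℂ 2 (oddPart F) = F := by
  ext n
  rw [coeff_add]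
  rcases Nat.even_or_odd n with ⟨j, hj⟩ | ⟨j, hj⟩
  · subst hj
    rw [coeff_expand (by norm_num)]
    rw [if_pos ⟨j, by ring⟩]
    have h2 : (Polynomial.X * Polynomial.expand ℂ 2 (oddPart F)).coeff (j + j) = 0 := by
      rcases Nat.eq_zero_or_pos j with rfl | hj0
      · simp
      · have : j + j = (j + j - 1) + 1 := by omega
        rw [this, coeff_X_mul, coeff_expand (by norm_num)]
        rw [if_neg (by omega)]
    rw [h2, add_zero, coeff_evenPart]
    congr 1
    omega
  · subst hj
    have h1 : (Polynomial.expand ℂ 2 (evenPart F)).coeff (2 * j + 1) = 0 := by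
      rw [coeff_expand (by norm_num), if_neg (by omega)]
    rw [h1, zero_add, coeff_X_mul, coeff_expand (by norm_num), if_pos ⟨j, by ring⟩,
      coeff_oddPart]
    congr 1
    omega

lemma expand_two_comp_neg_X (Q : Polynomial ℂ) :
    (Polynomial.expand ℂ 2 Q).comp (-Polynomial.X) = Polynomial.expand ℂ 2 Q := by
  rw [Polynomial.expand_eq_comp_X_pow, Polynomial.comp_assoc]
  congr 1
  simp [Polynomial.X_pow_comp, neg_pow]

lemma expand_graeffe (P : Polynomial ℂ) :
    Polynomial.expand ℂ 2 (graeffe P)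
      = (-1) ^ P.natDegree * (P * P.comp (-Polynomial.X)) := by
  have hdec := evenOdd_decomp P
  set A := Polynomial.expand ℂ 2 (evenPart P) with hA
  set B := Polynomial.expand ℂ 2 (oddPart P) with hB
  have hcomp : P.comp (-Polynomial.X) = A - Polynomial.X * B := by
    rw [← hdec]
    rw [add_comp, mul_comp, X_comp, expand_two_comp_neg_X, expand_two_comp_neg_X]
    ring
  rw [graeffe, map_mul, map_pow, map_neg, map_one, map_sub, map_pow, map_mul,
    map_pow, Polynomial.expand_X]
  have key : P * P.comp (-Polynomial.X) = A ^ 2 - Polynomial.X ^ 2 * B ^ 2 := by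
    rw [hcomp]
    conv_lhs => rw [← hdec]
    ring
  rw [key, ← hA, ← hB]

lemma graeffe_mul (P Q : Polynomial ℂ) (hP : P ≠ 0) (hQ : Q ≠ 0) :
    graeffe (P * Q) = graeffe P * graeffe Q := by
  apply Polynomial.expand_injective (R := ℂ) (n := 2) (by norm_num)
  rw [map_mul, expand_graeffe, expand_graeffe, expand_graeffe,
    Polynomial.natDegree_mul hP hQ, Polynomial.mul_comp, pow_add]
  ring

lemma graeffe_C (c : ℂ) : graeffe (Polynomial.C c) = Polynomial.C (c ^ 2) := by
  have h1 : evenPart (Polynomial.C c) = Polynomial.C c := by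
    rw [evenPart, natDegree_C]
    simp
  have h2 : oddPart (Polynomial.C c) = 0 := by
    rw [oddPart, natDegree_C]
    simp [Polynomial.coeff_C]
  rw [graeffe, h1, h2, natDegree_C]
  have h0 : (0 : Polynomial ℂ) ^ 2 = 0 := by norm_num
  rw [pow_zero, one_mul, h0, mul_zero, sub_zero, ← map_pow]

lemma graeffe_X_sub_C (b : ℂ) :
    graeffe (Polynomial.X - Polynomial.C b) = Polynomial.X - Polynomial.C (b ^ 2) := by
  have h1 : evenPart (Polynomial.X - Polynomial.C b) = Polynomial.C (-b) := by
    rw [evenPart, natDegree_X_sub_C]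
    rw [Finset.sum_range_succ, Finset.sum_range_one]
    simp [Polynomial.coeff_X, Polynomial.coeff_C, Polynomial.coeff_sub]
  have h2 : oddPart (Polynomial.X - Polynomial.C b) = 1 := by
    rw [oddPart, natDegree_X_sub_C]
    rw [Finset.sum_range_succ, Finset.sum_range_one]
    simp [Polynomial.coeff_X, Polynomial.coeff_C, Polynomial.coeff_sub]
  rw [graeffe, h1, h2, natDegree_X_sub_C]
  have hc : (Polynomial.C (-b)) ^ 2 = Polynomial.C (b ^ 2) := by
    rw [← map_pow, neg_pow_two]
  rw [pow_one, one_pow, mul_one, hc]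
  ring

lemma prodXsubC_ne_zero (s : Multiset ℂ) : (s.map fun b => Polynomial.X - Polynomial.C b).prod ≠ 0 := by
  apply Polynomial.Monic.ne_zero
  exact Polynomial.monic_multiset_prod_of_monic _ _ (fun b _ => Polynomial.monic_X_sub_C b)

lemma graeffe_prodForm (c : ℂ) (hc : c ≠ 0) (s : Multiset ℂ) :
    graeffe (Polynomial.C c * (s.map fun b => Polynomial.X - Polynomial.C b).prod)
      = Polynomial.C (c ^ 2) * ((s.map fun b => b ^ 2).map fun b => Polynomial.X - Polynomial.C b).prod := by
  induction s using Multiset.induction_on with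
  | empty => simp [graeffe_C]
  | cons b s ih =>
      rw [Multiset.map_cons, Multiset.prod_cons]
      have h1 : Polynomial.C c * ((Polynomial.X - Polynomial.C b) * (s.map fun b => Polynomial.X - Polynomial.C b).prod)
          = (Polynomial.X - Polynomial.C b) * (Polynomial.C c * (s.map fun b => Polynomial.X - Polynomial.C b).prod) := by ring
      rw [h1, graeffe_mul _ _ (Polynomial.X_sub_C_ne_zero b)
        (mul_ne_zero (Polynomial.C_ne_zero.mpr hc) (prodXsubC_ne_zero s)),
        graeffe_X_sub_C, ih]
      rw [Multiset.map_cons, Multiset.map_cons, Multiset.prod_cons]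
      ring

lemma graeffe_iterForm (Nn : ℕ) (c : ℂ) (hc : c ≠ 0) (s : Multiset ℂ) :
    graeffe^[Nn] (Polynomial.C c * (s.map fun b => Polynomial.X - Polynomial.C b).prod)
      = Polynomial.C (c ^ (2 ^ Nn)) * ((s.map fun b => b ^ (2 ^ Nn)).map fun b => Polynomial.X - Polynomial.C b).prod := by
  induction Nn generalizing c s with
  | zero =>
      simp only [Function.iterate_zero, id_eq, pow_zero, pow_one, Multiset.map_id']
  | succ n ih =>
      rw [Function.iterate_succ_apply, graeffe_prodForm c hc s,
        ih (c ^ 2) (pow_ne_zero 2 hc) (s.map fun b => b ^ 2)]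
      have hmm : (s.map fun b => b ^ 2).map (fun b => b ^ (2 ^ n))
          = s.map fun b => b ^ (2 ^ (n + 1)) := by
        rw [Multiset.map_map]
        apply Multiset.map_congr rfl
        intro b _
        simp only [Function.comp_apply]
        rw [← pow_mul, pow_succ, mul_comm]
      rw [hmm, ← pow_mul]
      congr 2
      rw [pow_succ, mul_comm]

lemma abs_multiset_sum (s : Multiset ℂ) : ‖s.sum‖ ≤ (s.map (‖·‖)).sum := by
  induction s using Multiset.induction_on with
  | empty => simp
  | cons a s ih =>
      rw [Multiset.sum_cons, Multiset.map_cons, Multiset.sum_cons]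
      exact le_trans (norm_add_le a s.sum) (by linarith)

lemma abs_multiset_prod (s : Multiset ℂ) : ‖s.prod‖ = (s.map (‖·‖)).prod := by
  induction s using Multiset.induction_on with
  | empty => simp
  | cons a s ih =>
      rw [Multiset.prod_cons, Multiset.map_cons, Multiset.prod_cons, norm_mul, ih]

lemma real_prod_le_pow (s : Multiset ℝ) (x : ℝ) (h0 : ∀ a ∈ s, 0 ≤ a) (hx : ∀ a ∈ s, a ≤ x) :
    s.prod ≤ x ^ Multiset.card s := by
  induction s using Multiset.induction_on with
  | empty => simp
  | cons a s ih =>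
      rw [Multiset.prod_cons, Multiset.card_cons, pow_succ, mul_comm (x ^ Multiset.card s) x]
      have ha0 : 0 ≤ a := h0 a (Multiset.mem_cons_self a s)
      have hax : a ≤ x := hx a (Multiset.mem_cons_self a s)
      have hs0 : 0 ≤ s.prod := Multiset.prod_nonneg (fun b hb => h0 b (Multiset.mem_cons_of_mem hb))
      exact mul_le_mul hax (ih (fun b hb => h0 b (Multiset.mem_cons_of_mem hb))
        (fun b hb => hx b (Multiset.mem_cons_of_mem hb))) hs0 (le_trans ha0 hax)

lemma real_pow_le_prod (s : Multiset ℝ) (x : ℝ) (hx0 : 0 ≤ x) (h : ∀ a ∈ s, x ≤ a) :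
    x ^ Multiset.card s ≤ s.prod := by
  induction s using Multiset.induction_on with
  | empty => simp
  | cons a s ih =>
      rw [Multiset.prod_cons, Multiset.card_cons, pow_succ, mul_comm (x ^ Multiset.card s) x]
      have hax : x ≤ a := h a (Multiset.mem_cons_self a s)
      exact mul_le_mul hax (ih (fun b hb => h b (Multiset.mem_cons_of_mem hb)))
        (pow_nonneg hx0 _) (le_trans hx0 hax)

lemma abs_esymm_le (s : Multiset ℂ) (x : ℝ) (hx : 0 ≤ x) (h : ∀ a ∈ s, ‖a‖ ≤ x)
    (j : ℕ) : ‖s.esymm j‖ ≤ ((Multiset.card s).choose j : ℝ) * x ^ j := by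
  rw [Multiset.esymm]
  refine le_trans (abs_multiset_sum _) ?_
  rw [Multiset.map_map]
  have hb : ∀ y ∈ (s.powersetCard j).map ((‖·‖) ∘ Multiset.prod), y ≤ x ^ j := by
    intro y hy
    obtain ⟨t, ht, rfl⟩ := Multiset.mem_map.mp hy
    obtain ⟨hts, htc⟩ := Multiset.mem_powersetCard.mp ht
    simp only [Function.comp_apply]
    rw [abs_multiset_prod]
    have := real_prod_le_pow (t.map (‖·‖)) x
      (fun b hb => by
        obtain ⟨c, _, rfl⟩ := Multiset.mem_map.mp hb
        exact norm_nonneg _)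
      (fun b hb => by
        obtain ⟨c, hc, rfl⟩ := Multiset.mem_map.mp hb
        exact h c (Multiset.mem_of_le hts hc))
    rwa [Multiset.card_map, htc] at this
  refine le_trans (Multiset.sum_le_card_nsmul _ _ hb) ?_
  rw [Multiset.card_map, Multiset.card_powersetCard, nsmul_eq_mul]

lemma esymm_T_bound (T : Multiset ℂ) (R : ℝ) (hR : 1 ≤ R) (h : ∀ a ∈ T, R ≤ ‖a‖)
    (b : ℕ) (hb : b ≤ Multiset.card T) :
    ‖T.esymm (Multiset.card T - b)‖ * R ^ b
      ≤ ((Multiset.card T).choose b : ℝ) * (T.map (‖·‖)).prod := by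
  have hR0 : (0:ℝ) ≤ R := le_trans zero_le_one hR
  rw [Multiset.esymm]
  have h1 : ‖(((T.powersetCard (Multiset.card T - b)).map Multiset.prod)).sum‖ * R ^ b
      ≤ (((T.powersetCard (Multiset.card T - b)).map
          (fun t => ‖t.prod‖ * R ^ b))).sum := by
    have e1 : (((T.powersetCard (Multiset.card T - b)).map
        (fun t => ‖t.prod‖ * R ^ b))).sum
        = (((T.powersetCard (Multiset.card T - b)).map
            (fun t => ‖t.prod‖))).sum * R ^ b := by
      rw [Multiset.sum_map_mul_right]
    rw [e1]
    refine mul_le_mul_of_nonneg_right ?_ (pow_nonneg hR0 _)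
    refine le_trans (abs_multiset_sum _) ?_
    rw [Multiset.map_map]
    exact le_of_eq rfl
  refine le_trans h1 ?_
  have hb2 : ∀ y ∈ (T.powersetCard (Multiset.card T - b)).map
      (fun t => ‖t.prod‖ * R ^ b), y ≤ (T.map (‖·‖)).prod := by
    intro y hy
    obtain ⟨t, ht, rfl⟩ := Multiset.mem_map.mp hy
    obtain ⟨hts, htc⟩ := Multiset.mem_powersetCard.mp ht
    have hsplit : t + (T - t) = T := add_tsub_cancel_of_le hts
    have hcard' : Multiset.card (T - t) = b := by
      have := congrArg Multiset.card hsplit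
      rw [Multiset.card_add] at this
      omega
    have hRle : R ^ b ≤ ((T - t).map (‖·‖)).prod := by
      have := real_pow_le_prod ((T - t).map (‖·‖)) R hR0
        (fun a ha => by
          obtain ⟨c, hc, rfl⟩ := Multiset.mem_map.mp ha
          exact h c (Multiset.mem_of_le (Multiset.sub_le_self T t) hc))
      rw [Multiset.card_map, hcard'] at this
      exact this
    calc ‖t.prod‖ * R ^ b
        ≤ ‖t.prod‖ * ((T - t).map (‖·‖)).prod :=
          mul_le_mul_of_nonneg_left hRle (norm_nonneg _)
      _ = (T.map (‖·‖)).prod := by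
          rw [abs_multiset_prod, ← Multiset.prod_add, ← Multiset.map_add, hsplit]
  refine le_trans (Multiset.sum_le_card_nsmul _ _ hb2) ?_
  rw [Multiset.card_map, Multiset.card_powersetCard, nsmul_eq_mul, Nat.choose_symm hb]

lemma coeff_rangeC (f : ℕ → ℝ) (d i : ℕ) :
    (∑ a ∈ Finset.range (d + 1), Polynomial.C (f a) * Polynomial.X ^ a).coeff i
      = if i ≤ d then f i else 0 := by
  rw [finset_sum_coeff]
  simp only [coeff_C_mul, coeff_X_pow, mul_ite, mul_one, mul_zero]
  rw [Finset.sum_ite_eq (Finset.range (d + 1)) i f]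
  simp [Finset.mem_range, Nat.lt_succ_iff]

lemma natDegree_rangeC (f : ℕ → ℝ) (d : ℕ) :
    (∑ a ∈ Finset.range (d + 1), Polynomial.C (f a) * Polynomial.X ^ a).natDegree ≤ d := by
  refine Polynomial.natDegree_sum_le_of_forall_le _ _ (fun a ha => ?_)
  refine le_trans (Polynomial.natDegree_C_mul_le _ _) ?_
  rw [Polynomial.natDegree_X_pow]
  exact Nat.lt_succ_iff.mp (Finset.mem_range.mp ha)

lemma eval_one_rangeC (f : ℕ → ℝ) (d : ℕ) :
    (∑ a ∈ Finset.range (d + 1), Polynomial.C (f a) * Polynomial.X ^ a).eval 1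
      = ∑ a ∈ Finset.range (d + 1), f a := by
  rw [Polynomial.eval_finset_sum]
  simp

lemma numeric_key (n : ℕ) (hn : 2 ≤ n) (Mh : ℕ) (hM : 16 * (1 + Real.logb 2 n) ≤ (Mh : ℝ)) :
    (n : ℝ) * (8 / 9 : ℝ) ^ Mh ≤ 3 / 10 := by
  have hn1 : (1 : ℝ) ≤ n := by exact_mod_cast Nat.one_le_of_lt hn
  have hnpos : (0 : ℝ) < n := by linarith
  have h89 : (0 : ℝ) < 8 / 9 := by norm_num
  have h891 : (8 / 9 : ℝ) ≤ 1 := by norm_num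
  have step1 : ((8 / 9 : ℝ)) ^ Mh = (8 / 9 : ℝ) ^ ((Mh : ℝ)) := by
    rw [Real.rpow_natCast]
  have step2 : (8 / 9 : ℝ) ^ ((Mh : ℝ)) ≤ (8 / 9 : ℝ) ^ (16 * (1 + Real.logb 2 n)) :=
    Real.rpow_le_rpow_of_exponent_ge h89 h891 hM
  have hmain : (n : ℝ) * (8 / 9 : ℝ) ^ (16 * (1 + Real.logb 2 n)) ≤ 3 / 10 := by
    set L := Real.log n with hLdef
    set l2 := Real.log 2 with hl2def
    set c := Real.log (9 / 8) with hcdef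
    have hl2 : 0 < l2 := Real.log_pos one_lt_two
    have hL : 0 ≤ L := Real.log_nonneg hn1
    have hA : Real.log (10 / 3) ≤ 16 * c := by
      have : Real.log ((9 / 8 : ℝ) ^ (16 : ℕ)) = 16 * c := by
        rw [Real.log_pow]; push_cast; ring
      rw [← this]
      apply Real.log_le_log (by norm_num)
      norm_num
    have hB : l2 ≤ 16 * c := by
      have : Real.log ((9 / 8 : ℝ) ^ (16 : ℕ)) = 16 * c := by
        rw [Real.log_pow]; push_cast; ring
      rw [← this]
      apply Real.log_le_log (by norm_num)
      norm_num
    have hlog89 : Real.log (8 / 9 : ℝ) = -c := by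
      rw [hcdef, ← Real.log_inv]
      norm_num
    have hlogb : Real.logb 2 n = L / l2 := by rw [Real.logb, hLdef, hl2def]
    have hrw : (8 / 9 : ℝ) ^ (16 * (1 + Real.logb 2 n))
        = Real.exp (-c * (16 * (1 + L / l2))) := by
      rw [Real.rpow_def_of_pos h89, hlog89, hlogb]
    have hrn : (n : ℝ) = Real.exp L := (Real.exp_log hnpos).symm
    rw [hrw, hrn, ← Real.exp_add]
    have h310 : (3 / 10 : ℝ) = Real.exp (Real.log (3 / 10)) := (Real.exp_log (by norm_num)).symm
    rw [h310]
    apply Real.exp_le_exp.mpr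
    have hlog310 : Real.log (3 / 10 : ℝ) = -Real.log (10 / 3) := by
      rw [← Real.log_inv]; norm_num
    rw [hlog310]
    set D := L / l2 with hDdef
    have hD : 0 ≤ D := div_nonneg hL hl2.le
    have hDL : D * l2 = L := div_mul_cancel₀ L hl2.ne'
    have h1 : D * l2 ≤ D * (16 * c) := mul_le_mul_of_nonneg_left hB hD
    nlinarith
  calc (n : ℝ) * (8 / 9 : ℝ) ^ Mh ≤ (n : ℝ) * (8 / 9 : ℝ) ^ (16 * (1 + Real.logb 2 n)) := by
        rw [step1]; exact mul_le_mul_of_nonneg_left step2 hnpos.le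
    _ ≤ 3 / 10 := hmain

lemma abs_add_lower (x y : ℂ) : ‖x‖ - ‖y‖ ≤ ‖x + y‖ := by
  have h := norm_add_le (x + y) (-y)
  simp only [add_neg_cancel_right] at h
  have h2 : ‖-y‖ = ‖y‖ := by simp
  linarith

set_option maxHeartbeats 1000000 in
lemma core_bound (Sp Tp : Multiset ℂ) (k q : ℕ) (hSk : Multiset.card Sp = k)
    (hTq : Multiset.card Tp = q) (hn1 : 1 ≤ k + q)
    (s₀ R : ℝ) (hs₀ : 0 ≤ s₀) (hR : 1 ≤ R)
    (hSb : ∀ β ∈ Sp, ‖β‖ ≤ s₀) (hTb : ∀ β ∈ Tp, R ≤ ‖β‖)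
    (hRinv : R⁻¹ ≤ s₀) (hsmall : ((k + q : ℕ) : ℝ) * s₀ ≤ 3 / 10) :
    (3 / 2 : ℝ) * ∑ i ∈ (Finset.range (k + q + 1)).erase k,
        ‖(((Sp + Tp).map fun b => Polynomial.X - Polynomial.C b).prod).coeff i‖
      < ‖(((Sp + Tp).map fun b => Polynomial.X - Polynomial.C b).prod).coeff k‖ := by
  have hR0 : (0:ℝ) < R := lt_of_lt_of_le zero_lt_one hR
  set n := k + q with hn
  set PS := (Sp.map fun b => Polynomial.X - Polynomial.C b).prod with hPS
  set PT := (Tp.map fun b => Polynomial.X - Polynomial.C b).prod with hPT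
  have hW : ((Sp + Tp).map fun b => Polynomial.X - Polynomial.C b).prod = PS * PT := by
    rw [Multiset.map_add, Multiset.prod_add]
  set P := (Tp.map (‖·‖)).prod with hPdef
  have hP1 : (1:ℝ) ≤ P := by
    have := real_pow_le_prod (Tp.map (‖·‖)) 1 zero_le_one
      (fun a ha => by
        obtain ⟨c, hc, rfl⟩ := Multiset.mem_map.mp ha
        exact le_trans hR (hTb c hc))
    rwa [one_pow] at this
  have hP0 : (0:ℝ) < P := lt_of_lt_of_le zero_lt_one hP1
  set u := ∑ a ∈ Finset.range (k + 1),
    Polynomial.C ((k.choose a : ℝ) * s₀ ^ (k - a)) * Polynomial.X ^ a with hu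
  set v := ∑ b ∈ Finset.range (q + 1),
    Polynomial.C ((q.choose b : ℝ) * P * (R⁻¹) ^ b) * Polynomial.X ^ b with hv
  have ucoeff : ∀ i, u.coeff i = if i ≤ k then (k.choose i : ℝ) * s₀ ^ (k - i) else 0 :=
    fun i => coeff_rangeC _ k i
  have vcoeff : ∀ i, v.coeff i = if i ≤ q then (q.choose i : ℝ) * P * (R⁻¹) ^ i else 0 :=
    fun i => coeff_rangeC _ q i
  have u_nn : ∀ i, 0 ≤ u.coeff i := by
    intro i; rw [ucoeff]; split
    · positivity
    · exact le_refl 0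
  have v_nn : ∀ i, 0 ≤ v.coeff i := by
    intro i; rw [vcoeff]; split
    · positivity
    · exact le_refl 0
  have hdegPS : PS.natDegree = k := by
    rw [hPS, Polynomial.natDegree_multiset_prod_X_sub_C_eq_card, hSk]
  have hdegPT : PT.natDegree = q := by
    rw [hPT, Polynomial.natDegree_multiset_prod_X_sub_C_eq_card, hTq]
  have hUc : ∀ a, ‖PS.coeff a‖ ≤ u.coeff a := by
    intro a
    rcases le_or_gt a k with hak | hak
    · rw [hPS, Multiset.prod_X_sub_C_coeff Sp (hSk ▸ hak)]
      rw [ucoeff, if_pos hak, hSk]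
      rw [norm_mul, norm_pow]
      have habs1 : ‖(-1 : ℂ)‖ = 1 := by simp
      rw [habs1, one_pow, one_mul]
      have := abs_esymm_le Sp s₀ hs₀ hSb (k - a)
      rw [hSk, Nat.choose_symm hak] at this
      exact this
    · have h0 : PS.coeff a = 0 :=
        Polynomial.coeff_eq_zero_of_natDegree_lt (by rw [hdegPS]; exact hak)
      rw [h0, norm_zero, ucoeff, if_neg (not_le.mpr hak)]
  have hVc : ∀ b, ‖PT.coeff b‖ ≤ v.coeff b := by
    intro b
    rcases le_or_gt b q with hbq | hbq
    · rw [hPT, Multiset.prod_X_sub_C_coeff Tp (hTq ▸ hbq)]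
      rw [vcoeff, if_pos hbq]
      rw [norm_mul, norm_pow]
      have habs1 : ‖(-1 : ℂ)‖ = 1 := by simp
      rw [habs1, one_pow, one_mul]
      rw [hTq]
      have := esymm_T_bound Tp R hR hTb b (hTq ▸ hbq)
      rw [hTq] at this
      have hRb : (0:ℝ) < R ^ b := pow_pos hR0 b
      rw [← hPdef] at this
      calc ‖Tp.esymm (q - b)‖
          = ‖Tp.esymm (q - b)‖ * R ^ b * (R⁻¹) ^ b := by
            rw [mul_assoc, ← mul_pow, mul_inv_cancel₀ (ne_of_gt hR0), one_pow, mul_one]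
        _ ≤ (q.choose b : ℝ) * P * (R⁻¹) ^ b :=
            mul_le_mul_of_nonneg_right this (pow_nonneg (inv_nonneg.mpr hR0.le) b)
    · have h0 : PT.coeff b = 0 :=
        Polynomial.coeff_eq_zero_of_natDegree_lt (by rw [hdegPT]; exact hbq)
      rw [h0, norm_zero, vcoeff, if_neg (not_le.mpr hbq)]
  have hPSk : PS.coeff k = 1 := by
    have hmon : PS.Monic := Polynomial.monic_multiset_prod_of_monic _ _
      (fun b _ => Polynomial.monic_X_sub_C b)
    have := hmon.coeff_natDegree
    rwa [hdegPS] at this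
  have hPT0 : ‖PT.coeff 0‖ = P := by
    rw [Polynomial.coeff_zero_eq_eval_zero, hPT, Polynomial.eval_multiset_prod,
      Multiset.map_map]
    have : (Tp.map fun b => Polynomial.eval 0 (Polynomial.X - Polynomial.C b)).prod
        = (Tp.map fun b => -b).prod := by
      congr 1
      apply Multiset.map_congr rfl
      intro b _
      simp
    rw [show Tp.map (Polynomial.eval 0 ∘ fun b => Polynomial.X - Polynomial.C b)
        = Tp.map fun b => Polynomial.eval 0 (Polynomial.X - Polynomial.C b) from rfl, this,
      abs_multiset_prod, Multiset.map_map]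
    congr 1
    apply Multiset.map_congr rfl
    intro b _
    simp
  have hucoeffk : u.coeff k = 1 := by
    rw [ucoeff, if_pos le_rfl, Nat.choose_self, Nat.sub_self, pow_zero]
    norm_num
  have hvcoeff0 : v.coeff 0 = P := by
    rw [vcoeff, if_pos (Nat.zero_le q), Nat.choose_zero_right, pow_zero]
    norm_num
  have hWle : ∀ i, ‖(PS * PT).coeff i‖ ≤ (u * v).coeff i := by
    intro i
    rw [Polynomial.coeff_mul, Polynomial.coeff_mul]
    refine le_trans (norm_sum_le _ _) ?_
    refine Finset.sum_le_sum (fun p _ => ?_)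
    rw [norm_mul]
    exact mul_le_mul (hUc p.1) (hVc p.2) (norm_nonneg _)
      (le_trans (norm_nonneg _) (hUc p.1))
  have hmem : ((k, 0) : ℕ × ℕ) ∈ Finset.HasAntidiagonal.antidiagonal k := by
    simp
  have huvk_ge : P ≤ (u * v).coeff k := by
    rw [Polynomial.coeff_mul]
    have := Finset.single_le_sum (f := fun p : ℕ × ℕ => u.coeff p.1 * v.coeff p.2)
      (fun p _ => mul_nonneg (u_nn p.1) (v_nn p.2)) hmem
    simpa [hucoeffk, hvcoeff0] using this
  have hWk_lower : 2 * P - (u * v).coeff k ≤ ‖(PS * PT).coeff k‖ := by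
    have hsplit : (PS * PT).coeff k
        = PT.coeff 0 + ∑ p ∈ (Finset.HasAntidiagonal.antidiagonal k).erase (k, 0),
            PS.coeff p.1 * PT.coeff p.2 := by
      rw [Polynomial.coeff_mul, ← Finset.add_sum_erase _ _ hmem, hPSk, one_mul]
    have hrest : ‖∑ p ∈ (Finset.HasAntidiagonal.antidiagonal k).erase (k, 0),
        PS.coeff p.1 * PT.coeff p.2‖ ≤ (u * v).coeff k - P := by
      refine le_trans (norm_sum_le _ _) ?_
      have h1 : ∑ p ∈ (Finset.HasAntidiagonal.antidiagonal k).erase (k, 0),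
          ‖PS.coeff p.1 * PT.coeff p.2‖
          ≤ ∑ p ∈ (Finset.HasAntidiagonal.antidiagonal k).erase (k, 0), u.coeff p.1 * v.coeff p.2 := by
        refine Finset.sum_le_sum (fun p _ => ?_)
        rw [norm_mul]
        exact mul_le_mul (hUc p.1) (hVc p.2) (norm_nonneg _)
          (le_trans (norm_nonneg _) (hUc p.1))
      refine le_trans h1 ?_
      rw [Finset.sum_erase_eq_sub hmem, ← Polynomial.coeff_mul, hucoeffk, hvcoeff0, one_mul]
    have htri : ‖PT.coeff 0‖ - ‖∑ p ∈
        (Finset.HasAntidiagonal.antidiagonal k).erase (k, 0), PS.coeff p.1 * PT.coeff p.2‖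
        ≤ ‖(PS * PT).coeff k‖ := by
      rw [hsplit]
      exact abs_add_lower _ _
    rw [hPT0] at htri
    linarith
  -- sum over erased range
  have hkmem : k ∈ Finset.range (n + 1) := Finset.mem_range.mpr (by omega)
  have hdeguv : (u * v).natDegree < n + 1 := by
    have := Polynomial.natDegree_mul_le (p := u) (q := v)
    have h1 := natDegree_rangeC (fun a => (k.choose a : ℝ) * s₀ ^ (k - a)) k
    have h2 := natDegree_rangeC (fun b => (q.choose b : ℝ) * P * (R⁻¹) ^ b) q
    rw [← hu] at h1
    rw [← hv] at h2
    omega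
  have hsum3 : ∑ i ∈ Finset.range (n + 1), (u * v).coeff i = (u * v).eval 1 := by
    rw [Polynomial.eval_eq_sum_range' hdeguv]
    simp
  have hevalu : u.eval 1 = (1 + s₀) ^ k := by
    rw [hu, eval_one_rangeC, add_pow]
    refine Finset.sum_congr rfl (fun a _ => ?_)
    rw [one_pow, one_mul]
    ring
  have hevalv : v.eval 1 = P * (R⁻¹ + 1) ^ q := by
    rw [hv, eval_one_rangeC, add_pow, Finset.mul_sum]
    refine Finset.sum_congr rfl (fun b _ => ?_)
    rw [one_pow, mul_one]
    ring
  have heval : (u * v).eval 1 = (1 + s₀) ^ k * (P * (R⁻¹ + 1) ^ q) := by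
    rw [Polynomial.eval_mul, hevalu, hevalv]
  -- numeric bound
  have hs03 : s₀ ≤ 3 / 10 := by
    have : (1:ℝ) ≤ ((k + q : ℕ) : ℝ) := by exact_mod_cast hn1
    nlinarith
  have hnum : (1 + s₀) ^ k * ((R⁻¹ + 1)) ^ q ≤ 10 / 7 := by
    have h1 : ((R⁻¹ + 1)) ^ q ≤ (1 + s₀) ^ q := by
      apply pow_le_pow_left₀ (by positivity)
      linarith
    have h2 : (1 + s₀) ^ k * (1 + s₀) ^ q = (1 + s₀) ^ n := by rw [← pow_add]
    have hBern : 1 - (n : ℝ) * s₀ ≤ (1 - s₀) ^ n := by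
      have := one_add_mul_le_pow (a := -s₀) (by linarith) n
      calc (1:ℝ) - (n:ℝ) * s₀ = 1 + (n:ℝ) * (-s₀) := by ring
        _ ≤ (1 + -s₀) ^ n := this
        _ = (1 - s₀) ^ n := by ring_nf
    have hns : ((n : ℕ) : ℝ) * s₀ ≤ 3 / 10 := hsmall
    have hprod : (1 + s₀) ^ n * (1 - s₀) ^ n ≤ 1 := by
      rw [← mul_pow]
      have : (1 + s₀) * (1 - s₀) = 1 - s₀ ^ 2 := by ring
      rw [this]
      apply pow_le_one₀ (by nlinarith) (by nlinarith)
    have hA0 : (0:ℝ) ≤ (1 + s₀) ^ k * ((R⁻¹ + 1)) ^ q := by positivity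
    have hB7 : (7:ℝ) / 10 ≤ (1 - s₀) ^ n := by linarith
    have hApos : (0:ℝ) ≤ (1 + s₀) ^ n := by positivity
    calc (1 + s₀) ^ k * ((R⁻¹ + 1)) ^ q ≤ (1 + s₀) ^ k * (1 + s₀) ^ q :=
          mul_le_mul_of_nonneg_left h1 (by positivity)
      _ = (1 + s₀) ^ n := h2
      _ ≤ 10 / 7 := by nlinarith
  -- final assembly
  set w := (u * v).coeff k with hw
  have hSig : ∑ i ∈ (Finset.range (n + 1)).erase k,
      ‖((PS * PT)).coeff i‖ ≤ (1 + s₀) ^ k * (P * (R⁻¹ + 1) ^ q) - w := by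
    calc ∑ i ∈ (Finset.range (n + 1)).erase k, ‖((PS * PT)).coeff i‖
        ≤ ∑ i ∈ (Finset.range (n + 1)).erase k, (u * v).coeff i :=
          Finset.sum_le_sum (fun i _ => hWle i)
      _ = (∑ i ∈ Finset.range (n + 1), (u * v).coeff i) - w := Finset.sum_erase_eq_sub hkmem
      _ = (1 + s₀) ^ k * (P * (R⁻¹ + 1) ^ q) - w := by rw [hsum3, heval]
  rw [hW]
  have hT1 : (1 + s₀) ^ k * (P * (R⁻¹ + 1) ^ q) ≤ 10 / 7 * P := by
    have : (1 + s₀) ^ k * (P * (R⁻¹ + 1) ^ q) = ((1 + s₀) ^ k * (R⁻¹ + 1) ^ q) * P := by ring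
    rw [this]
    exact mul_le_mul_of_nonneg_right hnum hP0.le
  have hgoal : (3 / 2 : ℝ) * ((1 + s₀) ^ k * (P * (R⁻¹ + 1) ^ q) - w) < 2 * P - w := by
    nlinarith [huvk_ge, hP0, hT1]
  calc (3 / 2 : ℝ) * ∑ i ∈ (Finset.range (n + 1)).erase k,
        ‖((PS * PT)).coeff i‖
      ≤ (3 / 2 : ℝ) * ((1 + s₀) ^ k * (P * (R⁻¹ + 1) ^ q) - w) := by linarith
    _ < 2 * P - w := hgoal
    _ ≤ ‖((PS * PT)).coeff k‖ := hWk_lower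

set_option maxHeartbeats 1000000 in
/-- **Success of the `T_k^G`-test** (Lemma `softtest:success` (a)): if `D(m,r)` is
`(ρ₁, ρ₂)`-isolating for a set of `k` roots of `F`, with `ρ₁ = 2√2/3` and `ρ₂ = 4/3`,
then, with `N := ⌈log₂(1 + log₂ n)⌉ + 5` and `G := (F_Δ)^{[N]}` the `N`-th Graeffe
iterate of `F_Δ(X) := F(m + r·X)`, the test `T_k(0, 1, 3/2, G)` succeeds, i.e.
`|g_k| > (3/2)·∑_{i ≠ k} |g_i|`. -/
theorem tkG_test_success (F : Polynomial ℂ) (n : ℕ) (hn : 2 ≤ n) (hdeg : F.natDegree = n)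
    (m : ℂ) (r : ℝ) (hr : 0 < r) (N : ℕ)
    (hN : (N : ℤ) = ⌈Real.logb 2 (1 + Real.logb 2 n)⌉ + 5)
    (k : ℕ) (hk : k ≤ n)
    (hin : rootsInDisk F m (2 * Real.sqrt 2 / 3 * r) = k)
    (hann : ∀ z ∈ F.roots,
      ¬(2 * Real.sqrt 2 / 3 * r ≤ ‖z - m‖ ∧ ‖z - m‖ < 4 / 3 * r)) :
    (3 / 2 : ℝ) * ∑ i ∈ (Finset.range (n + 1)).erase k,
        ‖(graeffe^[N] (F.comp (Polynomial.C m + Polynomial.C (r : ℂ) * Polynomial.X))).coeff i‖ <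
      ‖(graeffe^[N] (F.comp (Polynomial.C m + Polynomial.C (r : ℂ) * Polynomial.X))).coeff k‖ := by
  classical
  have hF : F ≠ 0 := by
    intro h
    rw [h, Polynomial.natDegree_zero] at hdeg
    omega
  set ρ1 : ℝ := 2 * Real.sqrt 2 / 3 with hρ1
  have hs2 : (0:ℝ) < Real.sqrt 2 := Real.sqrt_pos.mpr (by norm_num)
  have hρ1pos : 0 < ρ1 := by rw [hρ1]; positivity
  have hρ1sq : ρ1 ^ 2 = 8 / 9 := by
    rw [hρ1, div_pow, mul_pow, Real.sq_sqrt (by norm_num : (0:ℝ) ≤ 2)]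
    norm_num
  have hrC : (r : ℂ) ≠ 0 := Complex.ofReal_ne_zero.mpr (ne_of_gt hr)
  have ha : F.leadingCoeff ≠ 0 := Polynomial.leadingCoeff_ne_zero.mpr hF
  have hroots_card : Multiset.card F.roots = n := by
    rw [Polynomial.splits_iff_card_roots.mp (IsAlgClosed.splits F), hdeg]
  set f : ℂ → ℂ := fun z => (z - m) / r with hf
  set B : Multiset ℂ := F.roots.map f with hB
  have hcardB : Multiset.card B = n := by rw [hB, Multiset.card_map, hroots_card]
  set c0 : ℂ := F.leadingCoeff * (r : ℂ) ^ n with hc0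
  have hc0ne : c0 ≠ 0 := mul_ne_zero ha (pow_ne_zero n hrC)
  -- factor F_Δ
  have hFfact : Polynomial.C F.leadingCoeff *
      (F.roots.map fun z => Polynomial.X - Polynomial.C z).prod = F :=
    Polynomial.C_leadingCoeff_mul_prod_multiset_X_sub_C (by rw [hroots_card, hdeg])
  have hlin : ∀ z : ℂ, (Polynomial.X - Polynomial.C z).comp
      (Polynomial.C m + Polynomial.C (r:ℂ) * Polynomial.X)
      = Polynomial.C (r:ℂ) * (Polynomial.X - Polynomial.C (f z)) := by
    intro z
    rw [Polynomial.sub_comp, Polynomial.X_comp, Polynomial.C_comp, mul_sub, ← Polynomial.C_mul]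
    have : (r : ℂ) * f z = z - m := by
      rw [hf]
      field_simp
    rw [this, map_sub]
    ring
  have hFdelta : F.comp (Polynomial.C m + Polynomial.C (r:ℂ) * Polynomial.X)
      = Polynomial.C c0 * (B.map fun b => Polynomial.X - Polynomial.C b).prod := by
    conv_lhs => rw [← hFfact]
    rw [Polynomial.mul_comp, Polynomial.C_comp, Polynomial.multiset_prod_comp,
      Multiset.map_map]
    have h1 : F.roots.map ((fun p : Polynomial ℂ => p.comp
          (Polynomial.C m + Polynomial.C (r:ℂ) * Polynomial.X)) ∘
          fun z => Polynomial.X - Polynomial.C z)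
        = F.roots.map fun z => Polynomial.C (r:ℂ) * (Polynomial.X - Polynomial.C (f z)) := by
      apply Multiset.map_congr rfl
      intro z _
      exact hlin z
    rw [h1]
    have h2 : (F.roots.map fun z => Polynomial.C (r:ℂ) * (Polynomial.X - Polynomial.C (f z))).prod
        = (F.roots.map fun _ => Polynomial.C (r:ℂ)).prod *
          (F.roots.map fun z => Polynomial.X - Polynomial.C (f z)).prod := by
      rw [← Multiset.prod_map_mul]
    rw [h2, Multiset.map_const', Multiset.prod_replicate, hroots_card, ← mul_assoc,
      ← Polynomial.C_pow, ← Polynomial.C_mul, ← hc0]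
    rw [hB, Multiset.map_map]
    simp only [Function.comp]
  -- Graeffe iterates
  set E : ℕ := 2 ^ N with hE
  have hG : graeffe^[N] (F.comp (Polynomial.C m + Polynomial.C (r:ℂ) * Polynomial.X))
      = Polynomial.C (c0 ^ E) * ((B.map fun b => b ^ E).map
          fun b => Polynomial.X - Polynomial.C b).prod := by
    rw [hFdelta]
    exact graeffe_iterForm N c0 hc0ne B
  -- partition
  set S : Multiset ℂ := B.filter (fun α => ‖α‖ < ρ1) with hS
  set T : Multiset ℂ := B.filter (fun α => ¬ (‖α‖ < ρ1)) with hT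
  have hST : S + T = B := Multiset.filter_add_not _ B
  have hcardS : Multiset.card S = k := by
    rw [hS, hB, Multiset.filter_map]
    rw [Multiset.card_map]
    rw [← hin, rootsInDisk]
    congr 1
    apply Multiset.filter_congr
    intro z _
    simp only [Function.comp_apply, hf]
    rw [norm_div, Complex.norm_real, Real.norm_eq_abs, abs_of_pos hr, div_lt_iff₀ hr]
  have hcardT : Multiset.card T = n - k := by
    have := congrArg Multiset.card hST
    rw [Multiset.card_add, hcardB, hcardS] at this
    omega
  have hSmem : ∀ α ∈ S, ‖α‖ < ρ1 := by
    intro α hα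
    exact (Multiset.mem_filter.mp hα).2
  have hTmem : ∀ α ∈ T, (4/3 : ℝ) ≤ ‖α‖ := by
    intro α hα
    obtain ⟨hαB, hnot⟩ := Multiset.mem_filter.mp hα
    rw [hB] at hαB
    obtain ⟨z, hz, rfl⟩ := Multiset.mem_map.mp hαB
    have habs : ‖f z‖ = ‖z - m‖ / r := by
      rw [hf, norm_div, Complex.norm_real, Real.norm_eq_abs, abs_of_pos hr]
    have h1 : ρ1 * r ≤ ‖z - m‖ := by
      rw [not_lt, habs, le_div_iff₀ hr] at hnot
      linarith [hnot]
    have h2 := hann z hz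
    push_neg at h2
    have h3 := h2 h1
    rw [habs, le_div_iff₀ hr]
    linarith
  -- numeric setup
  have hN1 : 1 ≤ N := by
    have h1 : Real.logb 2 (1 + Real.logb 2 n) ≤ (⌈Real.logb 2 (1 + Real.logb 2 n)⌉ : ℝ) :=
      Int.le_ceil _
    have hlogn : (0:ℝ) ≤ Real.logb 2 n :=
      Real.logb_nonneg (by norm_num) (by exact_mod_cast Nat.one_le_of_lt hn)
    have hlogx : (0:ℝ) ≤ Real.logb 2 (1 + Real.logb 2 n) :=
      Real.logb_nonneg (by norm_num) (by linarith)
    have : (5:ℝ) ≤ ((N:ℤ):ℝ) := by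
      rw [hN]
      push_cast
      linarith
    have : (5:ℝ) ≤ (N:ℝ) := by exact_mod_cast this
    by_contra h
    push_neg at h
    interval_cases N
    · norm_num at this
  set Mh : ℕ := 2 ^ (N - 1) with hMh
  have hE2 : E = Mh * 2 := by
    rw [hE, hMh, ← pow_succ]
    congr 1
    omega
  have hMbig : 16 * (1 + Real.logb 2 (n:ℝ)) ≤ (Mh : ℝ) := by
    set x : ℝ := 1 + Real.logb 2 n with hx
    have hlogn1 : (1:ℝ) ≤ Real.logb 2 n := by
      have := Real.logb_le_logb_of_le (b := 2) (by norm_num) (by norm_num : (0:ℝ) < 2)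
        (by exact_mod_cast hn : (2:ℝ) ≤ (n:ℝ))
      rwa [Real.logb_self_eq_one (by norm_num)] at this
    have hxpos : (0:ℝ) < x := by rw [hx]; linarith
    have hNreal : Real.logb 2 x + 5 ≤ (N:ℝ) := by
      have h1 : Real.logb 2 x ≤ (⌈Real.logb 2 x⌉ : ℝ) := Int.le_ceil _
      have h2 : ((N:ℤ):ℝ) = (⌈Real.logb 2 x⌉ : ℝ) + 5 := by rw [hN]; push_cast; ring
      have h3 : ((N:ℤ):ℝ) = (N:ℝ) := by push_cast; ring
      linarith
    have hcast : ((Mh:ℕ):ℝ) = (2:ℝ) ^ (((N - 1 : ℕ)):ℝ) := by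
      rw [hMh]
      push_cast
      rw [Real.rpow_natCast]
    have hsub : (((N - 1 : ℕ)):ℝ) = (N:ℝ) - 1 := by
      have : ((N:ℕ)) - 1 + 1 = N := by omega
      push_cast [Nat.cast_sub hN1]
      ring
    have hexp : Real.logb 2 x + 4 ≤ (((N - 1 : ℕ)):ℝ) := by rw [hsub]; linarith
    have h16 : 16 * x = (2:ℝ) ^ (Real.logb 2 x + 4) := by
      rw [Real.rpow_add (by norm_num : (0:ℝ) < 2),
        Real.rpow_logb (by norm_num) (by norm_num) hxpos]
      have h4 : (2:ℝ) ^ (4:ℝ) = 16 := by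
        rw [show (4:ℝ) = ((4:ℕ):ℝ) by norm_num, Real.rpow_natCast]
        norm_num
      rw [h4]
      ring
    rw [hx] at h16 ⊢
    rw [h16, hcast]
    exact Real.rpow_le_rpow_of_exponent_le (by norm_num) (by rw [← hx]; exact hexp)
  -- apply core bound
  set s₀ : ℝ := (8/9 : ℝ) ^ Mh with hs₀def
  set R : ℝ := (4/3 : ℝ) ^ E with hRdef
  set Sp : Multiset ℂ := S.map (fun b => b ^ E) with hSp
  set Tp : Multiset ℂ := T.map (fun b => b ^ E) with hTp
  have hBdecomp : B.map (fun b => b ^ E) = Sp + Tp := by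
    rw [← hST, Multiset.map_add]
  have hSk : Multiset.card Sp = k := by rw [hSp, Multiset.card_map, hcardS]
  have hTq : Multiset.card Tp = n - k := by rw [hTp, Multiset.card_map, hcardT]
  have hs₀nn : (0:ℝ) ≤ s₀ := by positivity
  have hR1 : (1:ℝ) ≤ R := one_le_pow₀ (by norm_num : (1:ℝ) ≤ 4/3)
  have hSb : ∀ β ∈ Sp, ‖β‖ ≤ s₀ := by
    intro β hβ
    obtain ⟨α, hα, rfl⟩ := Multiset.mem_map.mp hβ
    rw [norm_pow]
    have h1 : ‖α‖ ≤ ρ1 := le_of_lt (hSmem α hα)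
    calc ‖α‖ ^ E ≤ ρ1 ^ E :=
          pow_le_pow_left₀ (norm_nonneg _) h1 E
      _ = (ρ1 ^ 2) ^ Mh := by rw [hE2, mul_comm Mh 2, pow_mul]
      _ = s₀ := by rw [hρ1sq, hs₀def]
  have hTb : ∀ β ∈ Tp, R ≤ ‖β‖ := by
    intro β hβ
    obtain ⟨α, hα, rfl⟩ := Multiset.mem_map.mp hβ
    rw [norm_pow, hRdef]
    exact pow_le_pow_left₀ (by norm_num) (hTmem α hα) E
  have hRinv : R⁻¹ ≤ s₀ := by
    rw [hRdef, ← inv_pow]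
    have hinv : ((4:ℝ)/3)⁻¹ = 3/4 := by norm_num
    rw [hinv]
    have h34 : ((3:ℝ)/4) ^ E = (((3:ℝ)/4) ^ 2) ^ Mh := by rw [hE2, mul_comm Mh 2, pow_mul]
    rw [h34, hs₀def]
    apply pow_le_pow_left₀ (by norm_num)
    norm_num
  have hsmall : ((k + (n - k) : ℕ) : ℝ) * s₀ ≤ 3 / 10 := by
    have hkq : k + (n - k) = n := by omega
    rw [hkq, hs₀def]
    exact numeric_key n hn Mh hMbig
  have hcore := core_bound Sp Tp k (n - k) hSk hTq (by omega) s₀ R hs₀nn hR1 hSb hTb hRinv hsmall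
  have hkq : k + (n - k) = n := by omega
  rw [hkq] at hcore
  -- transfer to G
  have hcA : (0:ℝ) < ‖c0 ^ E‖ :=
    norm_pos_iff.mpr (pow_ne_zero E hc0ne)
  rw [hG, hBdecomp]
  simp only [Polynomial.coeff_C_mul, norm_mul]
  rw [← Finset.mul_sum]
  set cA := ‖c0 ^ E‖ with hcAdef
  set Sig1 := ∑ i ∈ (Finset.range (n + 1)).erase k,
    ‖(((Sp + Tp).map fun b => Polynomial.X - Polynomial.C b).prod).coeff i‖ with hSig1
  have hrw : (3/2 : ℝ) * (cA * Sig1) = cA * ((3/2 : ℝ) * Sig1) := by ring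
  rw [hrw]
  exact mul_lt_mul_of_pos_left hcore hcA
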